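/- Let n ≥ 2, let b ∈ ℝ^n be a nonzero vector, let ε ∈ (0,1), let k ≥ 1, and let φ : (ℝ^n)^k → ℝ be arbitrary. Then there exists a nonzero n×n real symmetric matrix A with A b = b (hence A^i b = b for all i ≥ 1, so the Krylov information [Ab, A²b, …, A^k b] equals [b, b, …, b]) such that |λ_max(A) − φ(b, b, …, b)| > ε ‖A‖. In other words, for any fixed starting vector b there are symmetric matrices for which Krylov information, of arbitrary cardinality, does not suffice to approximate the largest eigenvalue to within ε‖A‖. -/

import Mathlib

/-- The Euclidean norm on `ℝ^n`. -/
noncomputable def euclNorm {n : ℕ} (v : Fin n → ℝ) : ℝ := Real.sqrt (∑ i, v i ^ 2)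

/-- The spectral norm of an `n × n` real matrix: the operator norm induced by the
Euclidean norm. -/
noncomputable def specNorm {n : ℕ} (A : Matrix (Fin n) (Fin n) ℝ) : ℝ :=
  ‖LinearMap.toContinuousLinearMap (Matrix.toEuclideanLin A)‖

/-- The largest eigenvalue of a real matrix (for a symmetric matrix this is the
maximum of the real spectrum). -/
noncomputable def lamMax {n : ℕ} (A : Matrix (Fin n) (Fin n) ℝ) : ℝ :=
  sSup {μ : ℝ | ∃ v : Fin n → ℝ, v ≠ 0 ∧ A.mulVec v = μ • v}

lemma key_lemma (n : ℕ) (hn : 2 ≤ n) (b : Fin n → ℝ) (hb : b ≠ 0) (t : ℝ) (ht : 1 ≤ t) :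
    ∃ A : Matrix (Fin n) (Fin n) ℝ, A ≠ 0 ∧ A.IsSymm ∧ A.mulVec b = b ∧
      (∀ i : ℕ, 1 ≤ i → (A ^ i).mulVec b = b) ∧ lamMax A = t ∧ specNorm A = t := by
  classical
  set s : ℝ := ∑ i, b i ^ 2 with hs_def
  obtain ⟨i₀, hi₀⟩ : ∃ i, b i ≠ 0 := Function.ne_iff.mp hb
  have hs : 0 < s := by
    apply Finset.sum_pos' (fun i _ => sq_nonneg _)
    exact ⟨i₀, Finset.mem_univ _, by positivity⟩
  set A : Matrix (Fin n) (Fin n) ℝ :=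
    Matrix.of fun i j => t * (if i = j then 1 else 0) + (1 - t) * (b i * b j / s) with hA_def
  have hmul : ∀ v : Fin n → ℝ, A.mulVec v =
      fun i => t * v i + (1 - t) * b i / s * (∑ j, b j * v j) := by
    intro v
    funext i
    simp only [Matrix.mulVec, dotProduct, hA_def, Matrix.of_apply]
    have : ∀ j, (t * (if i = j then (1:ℝ) else 0) + (1 - t) * (b i * b j / s)) * v j
        = (if j = i then t * v j else 0) + (1 - t) * b i / s * (b j * v j) := by
      intro j
      by_cases h : i = j <;> simp [h, eq_comm] <;> ring
    rw [Finset.sum_congr rfl fun j _ => this j, Finset.sum_add_distrib,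
      Finset.sum_ite_eq' Finset.univ i (fun j => t * v j), ← Finset.mul_sum]
    simp
  have hDb : ∑ j, b j * b j = s := by
    simp [hs_def, sq]
  have hAb : A.mulVec b = b := by
    funext i
    rw [hmul, hDb]
    field_simp
    ring
  have hAne : A ≠ 0 := by
    intro h
    apply hb
    rw [← hAb, h]
    simp [Matrix.mulVec]
  have hsymm : A.IsSymm := by
    ext i j
    simp only [Matrix.transpose_apply, hA_def, Matrix.of_apply]
    by_cases h : i = j
    · simp [h]
    · simp only [h, Ne.symm h, if_false]
      ring
  have hpow : ∀ i : ℕ, 1 ≤ i → (A ^ i).mulVec b = b := by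
    intro i hi
    induction i with
    | zero => omega
    | succ m ih =>
      rcases Nat.eq_or_lt_of_le hi with h | h
      · simp [← h, hAb]
      · have hm : 1 ≤ m := by omega
        rw [pow_succ, ← Matrix.mulVec_mulVec, hAb, ih hm]
  -- the orthogonal eigenvector
  obtain ⟨j₀, hj₀⟩ : ∃ j : Fin n, j ≠ i₀ :=
    Fintype.exists_ne_of_one_lt_card (by simp; omega) i₀
  set w : Fin n → ℝ := fun i => if i = j₀ then b i₀ else if i = i₀ then -(b j₀) else 0 with hw_def
  have hwne : w ≠ 0 := by
    intro h
    apply hi₀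
    have := congrFun h j₀
    simpa [hw_def] using this
  have hDw : ∑ j, b j * w j = 0 := by
    have : ∀ j, b j * w j = (if j = j₀ then b j₀ * b i₀ else 0)
        + (if j = i₀ then -(b i₀ * b j₀) else 0) := by
      intro j
      by_cases h1 : j = j₀
      · subst h1
        simp [hw_def, hj₀]
      · by_cases h2 : j = i₀
        · subst h2
          simp [hw_def, h1, Ne.symm hj₀]
        · simp [hw_def, h1, h2]
    rw [Finset.sum_congr rfl fun j _ => this j, Finset.sum_add_distrib,
      Finset.sum_ite_eq' Finset.univ j₀ (fun j => b j₀ * b i₀),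
      Finset.sum_ite_eq' Finset.univ i₀ (fun j => -(b i₀ * b j₀))]
    simp [mul_comm]
  have hAw : A.mulVec w = t • w := by
    funext i
    rw [hmul, hDw]
    simp
  -- lamMax = t
  have upper : ∀ μ ∈ {μ : ℝ | ∃ v : Fin n → ℝ, v ≠ 0 ∧ A.mulVec v = μ • v}, μ ≤ t := by
    rintro μ ⟨v, hv, hAv⟩
    set D : ℝ := ∑ j, b j * v j with hD_def
    have hdot : D = μ * D := by
      have h1 : ∑ i, b i * (A.mulVec v i) = D := by
        rw [hmul]
        have : ∀ i, b i * (t * v i + (1 - t) * b i / s * D)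
            = t * (b i * v i) + (1 - t) / s * D * (b i ^ 2) := by
          intro i; ring
        rw [Finset.sum_congr rfl fun i _ => this i, Finset.sum_add_distrib,
          ← Finset.mul_sum, ← Finset.mul_sum, ← hD_def, ← hs_def]
        field_simp
        ring
      have h2 : ∑ i, b i * (A.mulVec v i) = μ * D := by
        rw [hAv]
        simp only [Pi.smul_apply, smul_eq_mul]
        rw [hD_def, Finset.mul_sum]
        exact Finset.sum_congr rfl fun i _ => by ring
      exact h1.symm.trans h2
    by_cases hμ : μ = 1
    · rw [hμ]; exact ht
    · have hD0 : D = 0 := by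
        rcases mul_eq_zero.mp (show (1 - μ) * D = 0 by linarith [hdot]) with h | h
        · exact absurd (by linarith : μ = 1) hμ
        · exact h
      obtain ⟨i, hi⟩ := Function.ne_iff.mp hv
      simp only [Pi.zero_apply] at hi
      have heq := congrFun hAv i
      rw [hmul] at heq
      simp only [← hD_def, hD0, mul_zero, add_zero, Pi.smul_apply, smul_eq_mul] at heq
      exact (mul_right_cancel₀ hi heq).ge
  have htE : t ∈ {μ : ℝ | ∃ v : Fin n → ℝ, v ≠ 0 ∧ A.mulVec v = μ • v} := ⟨w, hwne, hAw⟩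
  have hlam : lamMax A = t := by
    unfold lamMax
    exact le_antisymm (csSup_le ⟨t, htE⟩ upper) (le_csSup ⟨t, upper⟩ htE)
  -- specNorm = t
  have key2 : ∀ v : Fin n → ℝ, ∑ i, (A.mulVec v i) ^ 2 ≤ t ^ 2 * ∑ i, (v i) ^ 2 := by
    intro v
    set D : ℝ := ∑ j, b j * v j with hD_def
    have hexp : ∑ i, (A.mulVec v i) ^ 2
        = t ^ 2 * (∑ i, (v i) ^ 2) + (1 - t ^ 2) * (D ^ 2 / s) := by
      rw [hmul]
      have : ∀ i, ((fun i => t * v i + (1 - t) * b i / s * D) i) ^ 2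
          = t ^ 2 * (v i) ^ 2 + (2 * t * (1 - t) * D / s) * (b i * v i)
            + ((1 - t) * D / s) ^ 2 * (b i) ^ 2 := by
        intro i
        simp only
        field_simp
        ring
      rw [Finset.sum_congr rfl fun i _ => this i, Finset.sum_add_distrib,
        Finset.sum_add_distrib, ← Finset.mul_sum, ← Finset.mul_sum, ← Finset.mul_sum,
        ← hD_def, ← hs_def]
      field_simp
      ring
    have hq : 0 ≤ D ^ 2 / s := div_nonneg (sq_nonneg _) hs.le
    have ht2 : 1 - t ^ 2 ≤ 0 := by nlinarith
    nlinarith [mul_nonpos_of_nonpos_of_nonneg ht2 hq]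
  set f := LinearMap.toContinuousLinearMap (Matrix.toEuclideanLin A) with hf_def
  have hcoord : ∀ (x : EuclideanSpace ℝ (Fin n)) (i : Fin n),
      f x i = A.mulVec (fun j => x j) i := by
    intro x i
    simp [hf_def, Matrix.toEuclideanLin_apply]
  have hub : ‖f‖ ≤ t := by
    apply ContinuousLinearMap.opNorm_le_bound _ (by linarith)
    intro x
    rw [EuclideanSpace.norm_eq, EuclideanSpace.norm_eq]
    have hrw : t * Real.sqrt (∑ i, ‖x i‖ ^ 2) = Real.sqrt (t ^ 2 * ∑ i, ‖x i‖ ^ 2) := by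
      rw [Real.sqrt_mul (sq_nonneg t), Real.sqrt_sq (by linarith : (0:ℝ) ≤ t)]
    rw [hrw]
    apply Real.sqrt_le_sqrt
    simp only [Real.norm_eq_abs, sq_abs, hcoord]
    exact key2 (fun j => x j)
  set xw : EuclideanSpace ℝ (Fin n) := (WithLp.equiv 2 (Fin n → ℝ)).symm w with hxw_def
  have hxwne : xw ≠ 0 := by
    intro h
    apply hwne
    funext i
    have : xw i = w i := rfl
    rw [← this, h]
    rfl
  have hfxw : f xw = t • xw := by
    ext i
    have h1 : f xw i = A.mulVec w i := hcoord xw i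
    rw [h1, hAw]
    rfl
  have hlb : t ≤ ‖f‖ := by
    have h0 : 0 < ‖xw‖ := norm_pos_iff.mpr hxwne
    have hle := f.le_opNorm xw
    rw [hfxw, norm_smul, Real.norm_eq_abs, abs_of_nonneg (by linarith : (0:ℝ) ≤ t)] at hle
    exact le_of_mul_le_mul_right hle h0
  exact ⟨A, hAne, hsymm, hAb, hpow, hlam, le_antisymm hub hlb⟩

theorem stmt_6 (n : ℕ) (hn : 2 ≤ n) (b : Fin n → ℝ) (hb : b ≠ 0)
    (ε : ℝ) (hε : ε ∈ Set.Ioo (0 : ℝ) 1) (k : ℕ) (hk : 1 ≤ k)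
    (φ : (Fin k → (Fin n → ℝ)) → ℝ) :
    ∃ A : Matrix (Fin n) (Fin n) ℝ, A ≠ 0 ∧ A.IsSymm ∧ A.mulVec b = b ∧
      (∀ i : ℕ, 1 ≤ i → (A ^ i).mulVec b = b) ∧
      ε * specNorm A < |lamMax A - φ (fun _ => b)| := by
  obtain ⟨hε0, hε1⟩ := hε
  set c : ℝ := φ (fun _ => b) with hc_def
  set t : ℝ := max 2 ((|c| + 1) / (1 - ε)) with ht_def
  have ht : 1 ≤ t := le_trans one_le_two (le_max_left _ _)
  obtain ⟨A, h1, h2, h3, h4, h5, h6⟩ := key_lemma n hn b hb t ht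
  refine ⟨A, h1, h2, h3, h4, ?_⟩
  rw [h5, h6]
  have h7 : |c| + 1 ≤ t * (1 - ε) := by
    have hmax := le_max_right 2 ((|c| + 1) / (1 - ε))
    rw [← ht_def] at hmax
    exact (div_le_iff₀ (by linarith)).mp hmax
  have h8 : c ≤ |c| := le_abs_self c
  have h9 : t - c ≤ |t - c| := le_abs_self _
  nlinarith
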